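/- Let T > 0, a > 0 and ω ∈ ℝ. Then the limit as Δ → 0⁺ of |a / (a − T ω² Δ + i ω Δ)|^{1/Δ} exists and equals exp(T ω² / a), where | · | denotes the complex modulus. Consequently, if ω ≠ 0, this limit is strictly greater than 1: in Phillips' car-following model with relaxation time T, the per-vehicle amplification factor of a monochromatic speed disturbance of frequency ω equals e^{Tω²/θ'(s0)} > 1, so the model is string unstable. -/

import Mathlib

/-- String instability of Phillips' car-following model: the per-unit-vehicle
amplification factor `lim_{Δ→0⁺} |a/(a − Tω²Δ + iωΔ)|^{1/Δ}` equals `exp(Tω²/a)`,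
which exceeds 1 whenever `ω ≠ 0`. -/
theorem phillips_string_unstable (T a ω : ℝ) (hT : 0 < T) (ha : 0 < a) :
    Filter.Tendsto
      (fun Δ : ℝ =>
        (‖(a : ℂ) /
          (((a - T * ω ^ 2 * Δ : ℝ) : ℂ) + ((ω * Δ : ℝ) : ℂ) * Complex.I)‖) ^ (1 / Δ))
      (nhdsWithin 0 (Set.Ioi 0)) (nhds (Real.exp (T * ω ^ 2 / a))) ∧
    (ω ≠ 0 → 1 < Real.exp (T * ω ^ 2 / a)) := by
  constructor
  · set q : ℝ → ℝ := fun Δ => (a - T * ω ^ 2 * Δ) ^ 2 + (ω * Δ) ^ 2 with hqdef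
    have hq0 : q 0 = a ^ 2 := by simp [hqdef]
    have hq0pos : 0 < q 0 := by rw [hq0]; positivity
    -- derivative of q at 0
    have h1 : HasDerivAt (fun Δ : ℝ => a - T * ω ^ 2 * Δ) (-(T * ω ^ 2)) 0 := by
      simpa using ((hasDerivAt_id (0 : ℝ)).const_mul (T * ω ^ 2)).const_sub a
    have h2 : HasDerivAt (fun Δ : ℝ => ω * Δ) ω 0 := by
      simpa using (hasDerivAt_id (0 : ℝ)).const_mul ω
    have hq : HasDerivAt q (-(2 * a * (T * ω ^ 2))) 0 := by
      have := (h1.pow 2).add (h2.pow 2)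
      exact this.congr_deriv (by simp)
    -- h = log a - (1/2) log (q Δ)
    set h : ℝ → ℝ := fun Δ => Real.log a - (1 / 2) * Real.log (q Δ) with hhdef
    have hh0 : h 0 = 0 := by
      simp only [hhdef, hq0]
      rw [Real.log_pow]
      ring
    have hhd : HasDerivAt h (T * ω ^ 2 / a) 0 := by
      have hl : HasDerivAt (fun Δ => Real.log (q Δ))
          ((-(2 * a * (T * ω ^ 2))) / q 0) 0 := hq.log (ne_of_gt hq0pos)
      have := (hasDerivAt_const (0 : ℝ) (Real.log a)).sub (hl.const_mul (1 / 2))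
      refine this.congr_deriv ?_
      rw [hq0]
      field_simp
      ring
    -- slope tendsto
    have hslope : Filter.Tendsto (fun Δ : ℝ => (1 / Δ) * h Δ)
        (nhdsWithin 0 (Set.Ioi 0)) (nhds (T * ω ^ 2 / a)) := by
      have := (hasDerivAt_iff_tendsto_slope.mp hhd).mono_left
        (nhdsWithin_mono 0 (by intro x hx; exact ne_of_gt hx : Set.Ioi (0:ℝ) ⊆ {(0:ℝ)}ᶜ))
      refine this.congr (fun Δ => ?_)
      simp [slope, hh0, div_eq_inv_mul]
    have hexp : Filter.Tendsto (fun Δ : ℝ => Real.exp ((1 / Δ) * h Δ))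
        (nhdsWithin 0 (Set.Ioi 0)) (nhds (Real.exp (T * ω ^ 2 / a))) :=
      (Real.continuous_exp.tendsto _).comp hslope
    -- eventual equality
    have hqc : Continuous q := by fun_prop
    have hev : ∀ᶠ Δ in nhdsWithin 0 (Set.Ioi 0), 0 < q Δ :=
      eventually_nhdsWithin_of_eventually_nhds
        ((hqc.tendsto 0).eventually (eventually_gt_nhds hq0pos))
    refine hexp.congr' ?_
    filter_upwards [hev, self_mem_nhdsWithin] with Δ hqpos (hΔ : 0 < Δ)
    have habs : ‖(a : ℂ) /
        (((a - T * ω ^ 2 * Δ : ℝ) : ℂ) + ((ω * Δ : ℝ) : ℂ) * Complex.I)‖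
        = a / Real.sqrt (q Δ) := by
      rw [norm_div, Complex.norm_add_mul_I, Complex.norm_real, Real.norm_eq_abs, abs_of_pos ha]
    have hsqrt_pos : 0 < Real.sqrt (q Δ) := Real.sqrt_pos.mpr hqpos
    have hbase : 0 < a / Real.sqrt (q Δ) := div_pos ha hsqrt_pos
    rw [habs, Real.rpow_def_of_pos hbase]
    congr 1
    rw [Real.log_div (ne_of_gt ha) (ne_of_gt hsqrt_pos),
      Real.log_sqrt (le_of_lt hqpos)]
    simp only [hhdef]
    ring
  · intro hω
    have : 0 < T * ω ^ 2 / a := by positivity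
    have := Real.exp_lt_exp.mpr this
    simpa using this
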